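/- The regular language R = (aa)^+ is not a maximal language: for every odd k ≥ 3 and every non-conflictual tagged k-word set Φ over Σ = {a}, Red(Φ) ≠ (aa)^+. -/

import Mathlib

/-!
Common framework from the paper "Higher-order Operator Precedence Languages":
tagged words over an alphabet `α` (with a distinguished end-mark letter
`hash`), the tag set Δ = {[, ], ⊙}, tagged `k`-word factors, conflictual sets,
the strictly-locally-testable tagged language `Loc(Φ)`, handles, reductions
`⇝_Φ`, and the (tagged) maximal languages `RedBar Φ` / `Red Φ`.

Conventions: an end-word `⍟` is the alternating word `(#⊙)^m #` of (tagged)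
length `k-2`, so that it contributes `(k-1)/2` end-marks on each side,
matching all the examples of the paper.
-/

namespace HOP

/-- The three tags `[`, `]`, `⊙`. -/
inductive Tagg : Type where
  | lb : Tagg
  | rb : Tagg
  | dot : Tagg
deriving DecidableEq

/-- Symbols: either a terminal letter of `α` or a tag. -/
abbrev Sym (α : Type) := α ⊕ Tagg

/-- The projection `σ` erasing all tags. -/
def erase {α : Type} (w : List (Sym α)) : List α := w.filterMap Sum.getLeft?

/-- Tagged words: words in `Σ(ΔΣ)*`, i.e. alternating terminals and tags,
beginning and ending with a terminal. -/
inductive IsTagged {α : Type} : List (Sym α) → Prop where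
  | single (a : α) : IsTagged [Sum.inl a]
  | cons (a : α) (t : Tagg) {w : List (Sym α)} :
      IsTagged w → IsTagged (Sum.inl a :: Sum.inr t :: w)

/-- `φ_k(w)`: the set of tagged `k`-words occurring as factors of `w`. -/
def taggedFactors {α : Type} (k : ℕ) (w : List (Sym α)) : Set (List (Sym α)) :=
  {u | u.length = k ∧ IsTagged u ∧ u <:+: w}

/-- A set of tagged words is conflictual iff it contains two distinct words
with the same tag-erasure. -/
def Conflictual {α : Type} (S : Set (List (Sym α))) : Prop :=
  ∃ x ∈ S, ∃ y ∈ S, x ≠ y ∧ erase x = erase y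

def NonConflictual {α : Type} (S : Set (List (Sym α))) : Prop := ¬ Conflictual S

/-- `S` is a set of tagged `k`-words. -/
def TaggedKWords {α : Type} (k : ℕ) (S : Set (List (Sym α))) : Prop :=
  ∀ u ∈ S, IsTagged u ∧ u.length = k

/-- `hashWord hash n = # ⊙ # ⊙ … #` with `n+1` end-marks (tagged length `2n+1`). -/
def hashWord {α : Type} (hash : α) : ℕ → List (Sym α)
  | 0 => [Sum.inl hash]
  | n + 1 => Sum.inl hash :: Sum.inr Tagg.dot :: hashWord hash n

/-- The end-word `⍟ ∈ (#⊙)*#` used with width `k`: it has tagged length `k-2`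
(for odd `k ≥ 3`), i.e. `(k-1)/2` end-marks. -/
def endwFor {α : Type} (hash : α) (k : ℕ) : List (Sym α) := hashWord hash ((k - 3) / 2)

/-- `wrap hash k w = ⍟ [ w ] ⍟`. -/
def wrap {α : Type} (hash : α) (k : ℕ) (w : List (Sym α)) : List (Sym α) :=
  endwFor hash k ++ Sum.inr Tagg.lb :: (w ++ Sum.inr Tagg.rb :: endwFor hash k)

/-- `finalWord hash k = ⍟ ⊙ ⍟`, the target of a complete reduction. -/
def finalWord {α : Type} (hash : α) (k : ℕ) : List (Sym α) :=
  endwFor hash k ++ Sum.inr Tagg.dot :: endwFor hash k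

/-- The (full-word form of the) `k`-strictly-locally-testable tagged language:
all tagged `k`-word factors belong to `Φ`.  A tagged word `w` is in `Loc(Φ)`
in the sense of the paper iff `wrap hash k w ∈ LocFull k Φ`. -/
def LocFull {α : Type} (k : ℕ) (Φ : Set (List (Sym α))) : Set (List (Sym α)) :=
  {w | IsTagged w ∧ taggedFactors k w ⊆ Φ}

/-- `Loc(Φ)` as a set of tagged words `w` (tested on `⍟[w]⍟`). -/
def LocTagged {α : Type} (hash : α) (k : ℕ) (Φ : Set (List (Sym α))) :
    Set (List (Sym α)) :=
  {w | IsTagged w ∧ wrap hash k w ∈ LocFull k Φ}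

/-- The body `x` of a handle `[x]`: a tagged word over `Σ - {#}` whose tags are
all `⊙`. -/
def IsHandleBody {α : Type} (hash : α) (x : List (Sym α)) : Prop :=
  IsTagged x ∧ (∀ t : Tagg, Sum.inr t ∈ x → t = Tagg.dot) ∧ Sum.inl hash ∉ x

/-- One reduction step `w[x]z ⇝_Φ w s z`, allowed when `[x]` is a handle and
both source and target have all their tagged `k`-factors in `Φ`. -/
def RStep {α : Type} (hash : α) (k : ℕ) (Φ : Set (List (Sym α)))
    (u v : List (Sym α)) : Prop :=
  ∃ w x z, ∃ s : Tagg, IsHandleBody hash x ∧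
    u = w ++ Sum.inr Tagg.lb :: (x ++ Sum.inr Tagg.rb :: z) ∧
    v = w ++ Sum.inr s :: z ∧
    u ∈ LocFull k Φ ∧ v ∈ LocFull k Φ

/-- `⇝*_Φ`. -/
def Reduces {α : Type} (hash : α) (k : ℕ) (Φ : Set (List (Sym α))) :
    List (Sym α) → List (Sym α) → Prop :=
  Relation.ReflTransGen (RStep hash k Φ)

/-- The tagged maximal language `Red̄(Φ)`. -/
def RedBar {α : Type} (hash : α) (k : ℕ) (Φ : Set (List (Sym α))) :
    Set (List (Sym α)) :=
  {w | IsTagged w ∧ Reduces hash k Φ (wrap hash k w) (finalWord hash k)}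

/-- The maximal language `Red(Φ) = σ(Red̄(Φ))`. -/
def Red {α : Type} (hash : α) (k : ℕ) (Φ : Set (List (Sym α))) : Set (List α) :=
  erase '' RedBar hash k Φ

/-- Length-`j` factors of a plain word. -/
def plainFactors {α : Type} (j : ℕ) (w : List α) : Set (List α) :=
  {u | u.length = j ∧ u <:+: w}

/-- The `j`-strictly-locally-testable (plain) language `Loc(F)`, with
end-words `#^(j-1)`; as usual the language is `ε`-free and over `Σ - {#}`. -/
def LocPlain {α : Type} (hash : α) (j : ℕ) (F : Set (List α)) : Set (List α) :=
  {x | x ≠ [] ∧ hash ∉ x ∧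
    plainFactors j
      (List.replicate (j - 1) hash ++ x ++ List.replicate (j - 1) hash) ⊆ F}

end HOP

namespace HOP

/-- The one-letter alphabet `{a}` together with the end-mark `#`. -/
inductive AH : Type where
  | a : AH
  | h : AH
deriving DecidableEq

open List

/-- `a t₁ a t₂ … a` building blocks: `pairs l = (a t₁)(a t₂)…`. -/
def pairs : List Tagg → List (Sym AH)
  | [] => []
  | t :: l => Sum.inl AH.a :: Sum.inr t :: pairs l

/-- tagged word over `{a}` with tag list `l`. -/
def fromTags (l : List Tagg) : List (Sym AH) := pairs l ++ [Sum.inl AH.a]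

/-- uniform tagged word: `n+1` letters `a`, all tags `t`. -/
def uni (t : Tagg) (n : ℕ) : List (Sym AH) := fromTags (List.replicate n t)

@[simp] lemma pairs_nil : pairs [] = [] := rfl
@[simp] lemma pairs_cons (t l) : pairs (t :: l) = Sum.inl AH.a :: Sum.inr t :: pairs l := rfl

lemma pairs_append (u v : List Tagg) : pairs (u ++ v) = pairs u ++ pairs v := by
  induction u with
  | nil => simp
  | cons t u ih => simp [ih]

@[simp] lemma pairs_length (l : List Tagg) : (pairs l).length = 2 * l.length := by
  induction l with
  | nil => simp
  | cons t l ih => simp [ih]; ring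

lemma fromTags_cons (t l) : fromTags (t :: l) = Sum.inl AH.a :: Sum.inr t :: fromTags l := by
  simp [fromTags]

@[simp] lemma fromTags_nil : fromTags [] = [Sum.inl AH.a] := rfl

@[simp] lemma fromTags_length (l : List Tagg) : (fromTags l).length = 2 * l.length + 1 := by
  simp [fromTags]

lemma fromTags_append (u v : List Tagg) : fromTags (u ++ v) = pairs u ++ fromTags v := by
  simp [fromTags, pairs_append]

lemma erase_append (u v : List (Sym AH)) : erase (u ++ v) = erase u ++ erase v := by
  simp [erase]

@[simp] lemma erase_fromTags (l : List Tagg) : erase (fromTags l) = List.replicate (l.length + 1) AH.a := by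
  induction l with
  | nil => rfl
  | cons t l ih => rw [fromTags_cons, replicate_succ]; exact congrArg (List.cons AH.a) ih

lemma tagged_fromTags (l : List Tagg) : IsTagged (fromTags l) := by
  induction l with
  | nil => exact IsTagged.single _
  | cons t l ih => rw [fromTags_cons]; exact IsTagged.cons _ _ ih

lemma fromTags_inj {u v : List Tagg} (h : fromTags u = fromTags v) : u = v := by
  induction u generalizing v with
  | nil => cases v with
    | nil => rfl
    | cons t v => rw [fromTags_cons] at h; simp [fromTags] at h
  | cons t u ih =>
    cases v with
    | nil => rw [fromTags_cons] at h; simp [fromTags] at h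
    | cons s v =>
      rw [fromTags_cons, fromTags_cons] at h
      simp at h
      exact by rw [h.1, ih h.2]

lemma mem_pairs {z : Sym AH} {l : List Tagg} (h : z ∈ pairs l) :
    z = Sum.inl AH.a ∨ ∃ t ∈ l, z = Sum.inr t := by
  induction l with
  | nil => simp at h
  | cons t l ih =>
    simp at h
    rcases h with h | h | h
    · left; exact h
    · right; exact ⟨t, by simp, h⟩
    · rcases ih h with h | ⟨s, hs, hz⟩
      · left; exact h
      · right; exact ⟨s, by simp [hs], hz⟩

lemma mem_hashWord {z : Sym AH} {n : ℕ} (h : z ∈ hashWord AH.h n) :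
    z = Sum.inl AH.h ∨ z = Sum.inr Tagg.dot := by
  induction n with
  | zero => simp [hashWord] at h; simp [h]
  | succ n ih =>
    simp [hashWord] at h
    rcases h with h | h | h
    · left; exact h
    · right; exact h
    · exact ih h

lemma tagged_hashWord (n : ℕ) : IsTagged (hashWord AH.h n) := by
  induction n with
  | zero => exact IsTagged.single _
  | succ n ih => exact IsTagged.cons _ _ ih

lemma tagged_glue {u v : List (Sym AH)} (s : Tagg) (hu : IsTagged u) (hv : IsTagged v) :
    IsTagged (u ++ Sum.inr s :: v) := by
  induction hu with
  | single a => exact IsTagged.cons _ _ hv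
  | cons a t w ih => exact IsTagged.cons _ _ ih

lemma tagged_wrap {w : List (Sym AH)} (k : ℕ) (hw : IsTagged w) :
    IsTagged (wrap AH.h k w) :=
  tagged_glue _ (tagged_hashWord _) (tagged_glue _ hw (tagged_hashWord _))

/-- representation of tagged words over `{a}`. -/
lemma rep_tagged {w : List (Sym AH)} (hw : IsTagged w) {m : ℕ}
    (he : erase w = List.replicate m AH.a) :
    ∃ ts : List Tagg, ts.length + 1 = m ∧ w = fromTags ts := by
  induction hw generalizing m with
  | single c =>
    have : erase [Sum.inl c] = [c] := rfl
    rw [this] at he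
    cases m with
    | zero => simp at he
    | succ m =>
      rw [replicate_succ] at he
      simp at he
      refine ⟨[], by simp [he.2.symm], by simp [he.1]⟩
  | @cons c t w hw ih =>
    have : erase (Sum.inl c :: Sum.inr t :: w) = c :: erase w := rfl
    rw [this] at he
    cases m with
    | zero => simp at he
    | succ m =>
      rw [replicate_succ] at he
      simp at he
      obtain ⟨ts, hlen, hts⟩ := ih he.2
      exact ⟨t :: ts, by simp [← hlen], by simp [fromTags_cons, he.1, hts]⟩
lemma infix_two_blocks {γ : Type} (A B C u : List γ) (hlen : u.length ≤ B.length + 1)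
    (h : u <:+: A ++ (B ++ C)) : u <:+: A ++ B ∨ u <:+: B ++ C := by
  obtain ⟨s, t, hst⟩ := h
  have htot : s.length + (u.length + t.length) = A.length + (B.length + C.length) := by
    have := congrArg List.length hst; simpa using this
  by_cases hc : s.length + u.length ≤ A.length + B.length
  · left
    have h1 : (s ++ u) <+: A ++ (B ++ C) := ⟨t, by simpa [List.append_assoc] using hst⟩
    have h2 : (A ++ B) <+: A ++ (B ++ C) := by
      rw [← List.append_assoc]; exact List.prefix_append _ _
    have h3 : (s ++ u) <+: A ++ B :=
      List.prefix_of_prefix_length_le h1 h2 (by simpa using hc)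
    exact ((List.suffix_append s u).isInfix).trans h3.isInfix
  · right
    push_neg at hc
    have hsA : A.length ≤ s.length := by omega
    have h1 : (u ++ t) <:+ A ++ (B ++ C) := ⟨s, by simpa [List.append_assoc] using hst⟩
    have h2 : (B ++ C) <:+ A ++ (B ++ C) := List.suffix_append _ _
    have h3 : (u ++ t) <:+ B ++ C :=
      List.suffix_of_suffix_length_le h1 h2 (by simp; omega)
    exact ((List.prefix_append u t).isInfix).trans h3.isInfix

lemma infix_pump {γ : Type} (A B C p u : List γ) (hcomm : p ++ B = B ++ p)
    (hlen : u.length ≤ B.length + 1) (h : u <:+: A ++ (B ++ C)) :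
    u <:+: A ++ ((p ++ B) ++ C) := by
  rcases infix_two_blocks A B C u hlen h with h | h
  · have he : A ++ ((p ++ B) ++ C) = (A ++ B) ++ (p ++ C) := by
      rw [hcomm]; simp [List.append_assoc]
    rw [he]
    exact h.trans (List.prefix_append _ _).isInfix
  · have he : A ++ ((p ++ B) ++ C) = (A ++ p) ++ (B ++ C) := by
      simp [List.append_assoc]
    rw [he]
    exact h.trans (List.suffix_append _ _).isInfix

lemma split_unique {γ : Type} (b : γ) : ∀ (s₁ s₂ t₁ t₂ : List γ),
    s₁ ++ b :: t₁ = s₂ ++ b :: t₂ → b ∉ s₂ → b ∉ t₂ → s₁ = s₂ ∧ t₁ = t₂ := by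
  intro s₁
  induction s₁ with
  | nil =>
    intro s₂ t₁ t₂ h h1 h2
    cases s₂ with
    | nil => simpa using h
    | cons c s₂ =>
      simp at h h1
      exact absurd h.1 h1.1
  | cons c s₁ ih =>
    intro s₂ t₁ t₂ h h1 h2
    cases s₂ with
    | nil =>
      rw [List.nil_append, List.cons_append] at h
      injection h with hh ht
      exact absurd (by rw [← ht]; simp) h2
    | cons d s₂ =>
      simp at h
      obtain ⟨rfl, h⟩ := h
      have := ih s₂ t₁ t₂ h (by simp at h1; tauto) h2
      simp [this.1, this.2]

lemma nm_app {γ : Type} {z : γ} {u v : List γ} (h1 : z ∉ u) (h2 : z ∉ v) : z ∉ u ++ v := by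
  simp [List.mem_append]; tauto

lemma nm_cons {γ : Type} {z c : γ} {v : List γ} (h1 : z ≠ c) (h2 : z ∉ v) : z ∉ c :: v := by
  simp; tauto
lemma a_not_mem_hashWord (n : ℕ) : Sum.inl AH.a ∉ hashWord AH.h n := by
  intro h
  rcases mem_hashWord h with h | h <;> simp at h

lemma a_not_mem_endw (k : ℕ) : Sum.inl AH.a ∉ endwFor AH.h k :=
  a_not_mem_hashWord _

lemma a_not_mem_final (k : ℕ) : Sum.inl AH.a ∉ finalWord AH.h k := by
  intro hm
  rw [finalWord] at hm
  rcases List.mem_append.1 hm with h1 | h1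
  · exact a_not_mem_endw _ h1
  · rcases List.mem_cons.1 h1 with h2 | h2
    · cases h2
    · exact a_not_mem_endw _ h2

lemma locfull_src {k : ℕ} {Φ : Set (List (Sym AH))} {u v : List (Sym AH)}
    (h : Reduces AH.h k Φ u v) (hne : u ≠ v) : u ∈ LocFull k Φ := by
  rcases Relation.ReflTransGen.cases_head h with h | ⟨c, hc, _⟩
  · exact absurd h hne
  · obtain ⟨w, x, z, s, _, _, _, hu, _⟩ := hc
    exact hu

lemma locfull_tgt {k : ℕ} {Φ : Set (List (Sym AH))} {u v : List (Sym AH)}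
    (h : Reduces AH.h k Φ u v) (hne : u ≠ v) : v ∈ LocFull k Φ := by
  rcases (Relation.ReflTransGen.cases_tail h) with h | ⟨c, _, hc⟩
  · exact absurd h.symm hne
  · obtain ⟨w, x, z, s, _, _, _, _, hv⟩ := hc
    exact hv

lemma stuck {k : ℕ} {Φ : Set (List (Sym AH))} {v : List (Sym AH)}
    (ha : Sum.inl AH.a ∈ v)
    (hb : Sum.inr Tagg.rb ∉ v ∨ Sum.inr Tagg.lb ∉ v)
    (h : Reduces AH.h k Φ v (finalWord AH.h k)) : False := by
  rcases Relation.ReflTransGen.cases_head h with h | ⟨c, hc, _⟩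
  · exact a_not_mem_final k (h ▸ ha)
  · obtain ⟨w, x, z, s, _, hu, _, _, _⟩ := hc
    rcases hb with hb | hb <;> apply hb <;> simp [hu]
lemma fromTags_head (l : List Tagg) : ∃ q, fromTags l = Sum.inl AH.a :: q := by
  cases l with
  | nil => exact ⟨[], rfl⟩
  | cons t l => exact ⟨_, fromTags_cons t l⟩

lemma fromTags_prefix {u v : List Tagg} (h : u <+: v) : fromTags u <+: fromTags v := by
  obtain ⟨r, rfl⟩ := h
  obtain ⟨q, hq⟩ := fromTags_head r
  exact ⟨q, by rw [fromTags_append, hq]; simp [fromTags]⟩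

lemma fromTags_suffix_drop (ts : List Tagg) (i : ℕ) : fromTags (ts.drop i) <:+ fromTags ts := by
  refine ⟨pairs (ts.take i), ?_⟩
  conv_rhs => rw [← List.take_append_drop i ts]
  rw [fromTags_append]

lemma infix_wrap (k : ℕ) (w : List (Sym AH)) : w <:+: wrap AH.h k w :=
  ⟨endwFor AH.h k ++ [Sum.inr Tagg.lb], Sum.inr Tagg.rb :: endwFor AH.h k, by simp [wrap]⟩

lemma uniform_tags {k : ℕ} (hk3 : 3 ≤ k) (hkodd : Odd k) {Φ : Set (List (Sym AH))}
    (hnc : NonConflictual Φ) {ts : List Tagg}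
    (hloc : wrap AH.h k (fromTags ts) ∈ LocFull k Φ)
    (hlong : (k - 1) / 2 + 1 ≤ ts.length) :
    ∃ t, ts = List.replicate ts.length t := by
  set K := (k - 1) / 2 with hKdef
  have hKk : 2 * K + 1 = k := by
    obtain ⟨j, hj⟩ := hkodd; omega
  have hK1 : 1 ≤ K := by omega
  have hwin : ∀ i, i + K ≤ ts.length → fromTags ((ts.drop i).take K) ∈ Φ := by
    intro i hi
    apply hloc.2
    refine ⟨?_, tagged_fromTags _, ?_⟩
    · rw [fromTags_length, List.length_take, List.length_drop]
      omega
    · exact ((fromTags_prefix (List.take_prefix _ _)).isInfix.trans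
        (fromTags_suffix_drop ts i).isInfix).trans (infix_wrap k _)
  have hcons : ∀ i, i + K + 1 ≤ ts.length →
      (ts.drop i).take K = (ts.drop (i+1)).take K := by
    intro i hi
    by_contra hne
    refine hnc ⟨_, hwin i (by omega), _, hwin (i+1) (by omega), ?_, ?_⟩
    · intro he; exact hne (fromTags_inj he)
    · rw [erase_fromTags, erase_fromTags, List.length_take, List.length_take,
        List.length_drop, List.length_drop]
      congr 2
      omega
  have hstep : ∀ j (hj : j + 1 < ts.length), ts[j]'(by omega) = ts[j+1]'(hj) := by
    intro j hj
    rcases le_or_gt (j + K + 1) ts.length with hc | hc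
    · have h2 := congrArg (fun l => l[0]?) (hcons j (by omega))
      simp only [List.getElem?_take, List.getElem?_drop] at h2
      rw [if_pos (by omega), if_pos (by omega)] at h2
      rw [List.getElem?_eq_getElem (by omega), List.getElem?_eq_getElem (by omega)] at h2
      simpa using h2
    · set i := ts.length - K - 1 with hidef
      have hjo : j - i < K := by omega
      have h2 := congrArg (fun l => l[j - i]?) (hcons i (by omega))
      simp only [List.getElem?_take, List.getElem?_drop] at h2
      rw [if_pos hjo, if_pos hjo] at h2
      have e1 : i + (j - i) = j := by omega
      have e2 : i + 1 + (j - i) = j + 1 := by omega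
      rw [e1, e2, List.getElem?_eq_getElem (by omega), List.getElem?_eq_getElem (by omega)] at h2
      simpa using h2
  have hpos : 0 < ts.length := by omega
  have hall : ∀ j (hj : j < ts.length), ts[j] = ts[0]'hpos := by
    intro j
    induction j with
    | zero => intro _; rfl
    | succ j ih =>
      intro hj
      rw [← hstep j (by omega)]
      exact ih (by omega)
  refine ⟨ts[0]'hpos, ?_⟩
  apply List.ext_getElem (by simp)
  intro i h1 h2
  rw [List.getElem_replicate]
  exact hall i h1
lemma wrap_uni (t : Tagg) (k n : ℕ) :
    wrap AH.h k (uni t n) =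
      endwFor AH.h k ++ Sum.inr Tagg.lb ::
        (pairs (List.replicate n t) ++
          Sum.inl AH.a :: Sum.inr Tagg.rb :: endwFor AH.h k) := by
  simp [wrap, uni, fromTags, List.append_assoc]

lemma pairs_rep_succ (t : Tagg) (n : ℕ) :
    pairs (List.replicate (n+1) t) =
      pairs (List.replicate n t) ++ [Sum.inl AH.a, Sum.inr t] := by
  rw [List.replicate_succ', pairs_append]; rfl

lemma pairs_rep_succ' (t : Tagg) (n : ℕ) :
    pairs (List.replicate (n+1) t) =
      Sum.inl AH.a :: Sum.inr t :: pairs (List.replicate n t) := by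
  rw [List.replicate_succ]; rfl

lemma tagged_rev {α : Type} {x : List (Sym α)} (hx : IsTagged x) :
    (∃ c, x = [Sum.inl c]) ∨
      ∃ y t c, Sum.inr t ∈ x ∧ x = y ++ [Sum.inr t, Sum.inl c] := by
  induction hx with
  | single c => exact Or.inl ⟨c, rfl⟩
  | cons c t hw ih =>
    rcases ih with ⟨d, rfl⟩ | ⟨y, t', d, hm, rfl⟩
    · exact Or.inr ⟨[Sum.inl c], t, d, by simp, by simp⟩
    · exact Or.inr ⟨Sum.inl c :: Sum.inr t :: y, t', d, by simp [hm], by simp⟩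

lemma not_mem_pairs_rep {s t : Tagg} (hne : s ≠ t) (n : ℕ) :
    Sum.inr s ∉ pairs (List.replicate n t) := by
  intro h
  rcases mem_pairs h with h | ⟨t', ht', h⟩
  · simp at h
  · rw [List.eq_of_mem_replicate ht'] at h
    exact hne (by injection h)

lemma tag_not_mem_hashWord {s : Tagg} (hs : s ≠ Tagg.dot) (n : ℕ) :
    Sum.inr s ∉ hashWord AH.h n := by
  intro h
  rcases mem_hashWord h with h | h
  · simp at h
  · exact hs (by injection h)

lemma a_mem_wrap_uni (t : Tagg) (k n : ℕ) : Sum.inl AH.a ∈ wrap AH.h k (uni t n) := by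
  rw [wrap_uni]; simp
lemma rb_notin_E (k : ℕ) : Sum.inr Tagg.rb ∉ endwFor AH.h k :=
  tag_not_mem_hashWord (by simp) _

lemma lb_notin_E (k : ℕ) : Sum.inr Tagg.lb ∉ endwFor AH.h k :=
  tag_not_mem_hashWord (by simp) _

lemma lb_step {k : ℕ} {Φ : Set (List (Sym AH))} {n : ℕ} {c : List (Sym AH)}
    (h : RStep AH.h k Φ (wrap AH.h k (uni Tagg.lb (n+1))) c)
    (hred : Reduces AH.h k Φ c (finalWord AH.h k)) :
    c = wrap AH.h k (uni Tagg.lb n) := by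
  obtain ⟨W, x, Z, s, hbody, hu, hv, _, _⟩ := h
  set E := endwFor AH.h k with hE
  have hu' : (W ++ Sum.inr Tagg.lb :: x) ++ Sum.inr Tagg.rb :: Z =
      (E ++ Sum.inr Tagg.lb :: (pairs (List.replicate (n+1) Tagg.lb) ++ [Sum.inl AH.a]))
        ++ Sum.inr Tagg.rb :: E := by
    rw [show (W ++ Sum.inr Tagg.lb :: x) ++ Sum.inr Tagg.rb :: Z =
      W ++ Sum.inr Tagg.lb :: (x ++ Sum.inr Tagg.rb :: Z) by simp, ← hu, wrap_uni]
    simp; rfl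
  have hrbP : Sum.inr Tagg.rb ∉
      E ++ Sum.inr Tagg.lb :: (pairs (List.replicate (n+1) Tagg.lb) ++ [Sum.inl AH.a]) :=
    nm_app (rb_notin_E k) (nm_cons (by simp)
      (nm_app (not_mem_pairs_rep (by simp) _) (by simp)))
  obtain ⟨hWx, hZ⟩ := split_unique _ _ _ _ _ hu' hrbP (rb_notin_E k)
  have hQ : E ++ Sum.inr Tagg.lb :: (pairs (List.replicate (n+1) Tagg.lb) ++ [Sum.inl AH.a]) =
      (E ++ Sum.inr Tagg.lb :: (pairs (List.replicate n Tagg.lb) ++ [Sum.inl AH.a]))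
        ++ [Sum.inr Tagg.lb, Sum.inl AH.a] := by
    rw [pairs_rep_succ]; simp
  rcases tagged_rev hbody.1 with ⟨d, rfl⟩ | ⟨y, t', d, hm, rfl⟩
  · have hWx' : W ++ [Sum.inr Tagg.lb, Sum.inl d] =
        (E ++ Sum.inr Tagg.lb :: (pairs (List.replicate n Tagg.lb) ++ [Sum.inl AH.a]))
          ++ [Sum.inr Tagg.lb, Sum.inl AH.a] := by
      rw [← hQ, ← hWx]
    obtain ⟨hW, -⟩ := List.append_inj' hWx' (by simp)
    rw [hW, hZ] at hv
    have hnorb : s ≠ Tagg.rb → Sum.inr Tagg.rb ∉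
        (E ++ Sum.inr Tagg.lb :: (pairs (List.replicate n Tagg.lb) ++ [Sum.inl AH.a]))
          ++ Sum.inr s :: E := by
      intro hs
      exact nm_app (nm_app (rb_notin_E k) (nm_cons (by simp)
        (nm_app (not_mem_pairs_rep (by simp) _) (by simp))))
        (nm_cons (fun hh => hs (Sum.inr.inj hh).symm) (rb_notin_E k))
    cases s with
    | rb => rw [hv, wrap_uni]; simp; rfl
    | lb =>
      exact absurd (stuck (by simp) (Or.inl (hnorb (by simp))) (hv ▸ hred)) not_false
    | dot =>
      exact absurd (stuck (by simp) (Or.inl (hnorb (by simp))) (hv ▸ hred)) not_false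
  · exfalso
    have ht' : t' = Tagg.dot := hbody.2.1 t' hm
    have hWx' : (W ++ Sum.inr Tagg.lb :: y) ++ [Sum.inr t', Sum.inl d] =
        (E ++ Sum.inr Tagg.lb :: (pairs (List.replicate n Tagg.lb) ++ [Sum.inl AH.a]))
          ++ [Sum.inr Tagg.lb, Sum.inl AH.a] := by
      rw [← hQ, ← hWx]; simp
    obtain ⟨-, heq⟩ := List.append_inj' hWx' (by simp)
    rw [ht'] at heq
    simp at heq
lemma rb_step {k : ℕ} {Φ : Set (List (Sym AH))} {n : ℕ} {c : List (Sym AH)}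
    (h : RStep AH.h k Φ (wrap AH.h k (uni Tagg.rb (n+1))) c)
    (hred : Reduces AH.h k Φ c (finalWord AH.h k)) :
    c = wrap AH.h k (uni Tagg.rb n) := by
  obtain ⟨W, x, Z, s, hbody, hu, hv, _, _⟩ := h
  set E := endwFor AH.h k with hE
  have hu' : W ++ Sum.inr Tagg.lb :: (x ++ Sum.inr Tagg.rb :: Z) =
      E ++ Sum.inr Tagg.lb :: (pairs (List.replicate (n+2) Tagg.rb) ++ E) := by
    rw [← hu, wrap_uni]
    simp [pairs_rep_succ]; rfl
  obtain ⟨hW, ht⟩ := split_unique _ _ _ _ _ hu' (lb_notin_E k)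
    (nm_app (not_mem_pairs_rep (by simp) _) (lb_notin_E k))
  obtain ⟨htag, hdot, hhash⟩ := hbody
  cases htag with
  | single d =>
    rw [pairs_rep_succ'] at ht
    simp only [List.singleton_append, List.cons_append] at ht
    injection ht with h1 ht
    injection ht with h2 ht
    rw [hW, ht] at hv
    cases s with
    | lb => rw [hv, wrap_uni, pairs_rep_succ]; simp; rfl
    | rb =>
      refine absurd (stuck ?_ (Or.inr ?_) (hv ▸ hred)) not_false
      · simp [pairs_rep_succ']
      · exact nm_app (lb_notin_E k) (nm_cons (by simp)
          (nm_app (not_mem_pairs_rep (by simp) _) (lb_notin_E k)))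
    | dot =>
      refine absurd (stuck ?_ (Or.inr ?_) (hv ▸ hred)) not_false
      · simp [pairs_rep_succ']
      · exact nm_app (lb_notin_E k) (nm_cons (by simp)
          (nm_app (not_mem_pairs_rep (by simp) _) (lb_notin_E k)))
  | cons d t hx' =>
    exfalso
    rw [pairs_rep_succ'] at ht
    simp only [List.cons_append] at ht
    injection ht with h1 ht
    injection ht with h2 ht
    have : t = Tagg.dot := hdot t (by simp)
    rw [this] at h2
    simp at h2
lemma wrap_uni_ne_final (t : Tagg) (k n : ℕ) :
    wrap AH.h k (uni t n) ≠ finalWord AH.h k := by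
  intro h
  exact a_not_mem_final k (h ▸ a_mem_wrap_uni t k n)

lemma descent_lb {k : ℕ} {Φ : Set (List (Sym AH))} {n : ℕ}
    (h : Reduces AH.h k Φ (wrap AH.h k (uni Tagg.lb (n+1))) (finalWord AH.h k)) :
    Reduces AH.h k Φ (wrap AH.h k (uni Tagg.lb n)) (finalWord AH.h k) := by
  rcases Relation.ReflTransGen.cases_head h with heq | ⟨c, hc, hrest⟩
  · exact absurd heq (wrap_uni_ne_final _ _ _)
  · rw [← lb_step hc hrest]
    exact hrest

lemma descent_rb {k : ℕ} {Φ : Set (List (Sym AH))} {n : ℕ}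
    (h : Reduces AH.h k Φ (wrap AH.h k (uni Tagg.rb (n+1))) (finalWord AH.h k)) :
    Reduces AH.h k Φ (wrap AH.h k (uni Tagg.rb n)) (finalWord AH.h k) := by
  rcases Relation.ReflTransGen.cases_head h with heq | ⟨c, hc, hrest⟩
  · exact absurd heq (wrap_uni_ne_final _ _ _)
  · rw [← rb_step hc hrest]
    exact hrest

lemma uni_handle_body (n : ℕ) : IsHandleBody AH.h (uni Tagg.dot n) := by
  refine ⟨tagged_fromTags _, ?_, ?_⟩
  · intro t ht
    rcases List.mem_append.1 ht with h1 | h1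
    · rcases mem_pairs h1 with h1 | ⟨t', ht', h1⟩
      · simp at h1
      · rw [List.eq_of_mem_replicate ht'] at h1
        exact (Sum.inr.inj h1).symm ▸ rfl
    · simp at h1
  · intro hmem
    rcases List.mem_append.1 hmem with h1 | h1
    · rcases mem_pairs h1 with h1 | ⟨t', ht', h1⟩ <;> simp at h1
    · simp at h1

lemma descent_dot {k : ℕ} {Φ : Set (List (Sym AH))} {n : ℕ} (hn : k ≤ n)
    (h : Reduces AH.h k Φ (wrap AH.h k (uni Tagg.dot (n+1))) (finalWord AH.h k)) :
    Reduces AH.h k Φ (wrap AH.h k (uni Tagg.dot n)) (finalWord AH.h k) := by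
  set E := endwFor AH.h k with hE
  have hloc1 : wrap AH.h k (uni Tagg.dot (n+1)) ∈ LocFull k Φ :=
    locfull_src h (wrap_uni_ne_final _ _ _)
  have hloc2 : finalWord AH.h k ∈ LocFull k Φ :=
    locfull_tgt h (wrap_uni_ne_final _ _ _)
  have hshape : wrap AH.h k (uni Tagg.dot n) =
      (E ++ [Sum.inr Tagg.lb]) ++ (pairs (List.replicate n Tagg.dot) ++
        (Sum.inl AH.a :: Sum.inr Tagg.rb :: E)) := by
    rw [wrap_uni]; simp; rfl
  have hshape' : wrap AH.h k (uni Tagg.dot (n+1)) =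
      (E ++ [Sum.inr Tagg.lb]) ++
        ((([Sum.inl AH.a, Sum.inr Tagg.dot] ++ pairs (List.replicate n Tagg.dot))) ++
        (Sum.inl AH.a :: Sum.inr Tagg.rb :: E)) := by
    rw [wrap_uni, pairs_rep_succ']; simp; rfl
  have hcomm : [Sum.inl AH.a, Sum.inr Tagg.dot] ++ pairs (List.replicate n Tagg.dot) =
      pairs (List.replicate n Tagg.dot) ++ [Sum.inl AH.a, Sum.inr Tagg.dot] := by
    rw [← pairs_rep_succ, pairs_rep_succ']
    rfl
  have hlocn : wrap AH.h k (uni Tagg.dot n) ∈ LocFull k Φ := by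
    refine ⟨tagged_wrap k (tagged_fromTags _), ?_⟩
    intro u hu
    obtain ⟨hlen, htag, hinf⟩ := hu
    apply hloc1.2
    refine ⟨hlen, htag, ?_⟩
    rw [hshape'];
    apply infix_pump _ _ _ _ _ hcomm
    · rw [hlen, pairs_length, List.length_replicate]
      omega
    · rw [← hshape]
      exact hinf
  refine Relation.ReflTransGen.single ?_
  refine ⟨E, uni Tagg.dot n, E, Tagg.dot, uni_handle_body n, rfl, rfl, hlocn, hloc2⟩
/-- From the proof of Theorem 2: the regular language `R = (aa)⁺` is not a
maximal language: for every odd `k ≥ 3` and every non-conflictual tagged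
`k`-word set `Φ`, `Red(Φ) ≠ (aa)⁺`. -/
theorem aa_not_maxtag : ∀ k : ℕ, Odd k → 3 ≤ k →
    ∀ Φ : Set (List (Sym AH)), TaggedKWords k Φ → NonConflictual Φ →
    Red AH.h k Φ ≠ {x | ∃ n : ℕ, 1 ≤ n ∧ x = List.replicate (2 * n) AH.a} := by
  intro k hodd hk3 Φ hTK hnc heq
  obtain ⟨j, hj⟩ := id hodd
  have hmem : List.replicate (k+3) AH.a ∈
      {x | ∃ n : ℕ, 1 ≤ n ∧ x = List.replicate (2*n) AH.a} :=
    ⟨j+2, by omega, by rw [show k+3 = 2*(j+2) by omega]⟩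
  rw [← heq] at hmem
  obtain ⟨w, hwRB, hwe⟩ := hmem
  obtain ⟨htagw, hredw⟩ := hwRB
  obtain ⟨ts, hlen, rfl⟩ := rep_tagged htagw hwe
  have hlen' : ts.length = k + 2 := by omega
  have hane : wrap AH.h k (fromTags ts) ≠ finalWord AH.h k := by
    intro hq
    apply a_not_mem_final k
    rw [← hq]
    obtain ⟨q, hq2⟩ := fromTags_head ts
    exact (infix_wrap k _).subset (by rw [hq2]; simp)
  have hloc := locfull_src hredw hane
  obtain ⟨t, hts⟩ := uniform_tags hk3 hodd hnc hloc (by omega)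
  rw [hts, hlen'] at hredw
  have hredw' : Reduces AH.h k Φ (wrap AH.h k (uni t (k+2))) (finalWord AH.h k) := hredw
  have hred2 : Reduces AH.h k Φ (wrap AH.h k (uni t (k+1))) (finalWord AH.h k) := by
    cases t with
    | lb => exact descent_lb hredw'
    | rb => exact descent_rb hredw'
    | dot => exact descent_dot (by omega) hredw'
  have hodd2 : List.replicate (k+2) AH.a ∈ Red AH.h k Φ :=
    ⟨uni t (k+1), ⟨tagged_fromTags _, hred2⟩,
      by simp [uni]⟩
  rw [heq] at hodd2
  obtain ⟨nn, hnn1, hnn2⟩ := hodd2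
  have hl := congrArg List.length hnn2
  simp at hl
  omega
end HOP
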